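/- arXiv:1503.06303 — 9 statements merged into one kernel-verified Lean document; each statement's English description precedes it below -/
import Mathlib

section
/- Let d ≥ 2 and let ρ be a density matrix on ℂ^d (a positive semidefinite d×d complex matrix with trace 1). Then C(ρ)²/(d-1)² + M(ρ) ≤ 1, where C(ρ) is the l1-norm of coherence of ρ and M(ρ) is its mixedness. -/
open scoped ComplexOrder

/-- The `l₁`-norm of coherence of a matrix `ρ` (in the standard basis):
the sum of the absolute values of the off-diagonal entries. -/
noncomputable def l1Coherence {d : ℕ} (ρ : Matrix (Fin d) (Fin d) ℂ) : ℝ :=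
  ∑ i, ∑ j, if i = j then 0 else ‖ρ i j‖

/-- The mixedness (normalized linear entropy) of a `d × d` density matrix `ρ`:
`(d/(d-1)) * (1 - Tr(ρ²))`. -/
noncomputable def mixedness (d : ℕ) (ρ : Matrix (Fin d) (Fin d) ℂ) : ℝ :=
  ((d : ℝ) / ((d : ℝ) - 1)) * (1 - ((ρ * ρ).trace).re)

/-- **Trade-off between coherence and mixedness.**  For any density matrix `ρ` on `ℂ^d`
(`d ≥ 2`), one has `C(ρ)²/(d-1)² + M(ρ) ≤ 1`. -/
theorem coherence_mixedness_tradeoff {d : ℕ} (hd : 2 ≤ d)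
    (ρ : Matrix (Fin d) (Fin d) ℂ) (hpsd : ρ.PosSemidef) (htr : ρ.trace = 1) :
    l1Coherence ρ ^ 2 / ((d : ℝ) - 1) ^ 2 + mixedness d ρ ≤ 1 := by
  have hherm := hpsd.1
  set D : ℝ := (d : ℝ) with hD
  have hD2 : (2 : ℝ) ≤ D := by rw [hD]; exact_mod_cast hd
  have hD1 : (0 : ℝ) < D - 1 := by linarith
  have hD0 : (0 : ℝ) < D := by linarith
  -- trace of ρ² as sum of squared abs values
  have habs2 : ∀ i j, ρ i j * ρ j i = (‖ρ i j‖ ^ 2 : ℝ) := by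
    intro i j
    have h1 : ρ j i = (starRingEnd ℂ) (ρ i j) := (hherm.apply j i).symm
    rw [h1, Complex.mul_conj]
    norm_cast
    rw [Complex.sq_norm]
  have htrace2 : ((ρ * ρ).trace).re = ∑ i, ∑ j, ‖ρ i j‖ ^ 2 := by
    have h : (ρ * ρ).trace = ∑ i, ∑ j, ρ i j * ρ j i := by
      simp [Matrix.trace, Matrix.diag, Matrix.mul_apply]
    rw [h]
    simp [habs2, Complex.re_sum]
    norm_cast
  -- split into diagonal and off-diagonal
  set C : ℝ := l1Coherence ρ with hC
  set Soff : ℝ := ∑ i, ∑ j, if i = j then 0 else ‖ρ i j‖ ^ 2 with hSoff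
  set Sdiag : ℝ := ∑ i, (ρ i i).re ^ 2 with hSdiag
  have hdiagabs : ∀ i, ‖ρ i i‖ ^ 2 = (ρ i i).re ^ 2 := by
    intro i
    have him : (ρ i i).im = 0 := by
      have := congrArg Complex.im (hherm.apply i i)
      simp [Complex.conj_im] at this
      linarith
    rw [Complex.sq_norm, Complex.normSq_apply, him]; ring
  have hsplit1 : ∀ i, ∑ j, ‖ρ i j‖ ^ 2
      = (ρ i i).re ^ 2 + ∑ j, (if i = j then 0 else ‖ρ i j‖ ^ 2) := by
    intro i
    have h : ∀ j, ‖ρ i j‖ ^ 2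
        = (if i = j then ‖ρ i j‖ ^ 2 else 0)
          + (if i = j then 0 else ‖ρ i j‖ ^ 2) := by
      intro j; by_cases h : i = j <;> simp [h]
    rw [Finset.sum_congr rfl fun j _ => h j, Finset.sum_add_distrib,
      Finset.sum_ite_eq Finset.univ i (fun j => ‖ρ i j‖ ^ 2),
      if_pos (Finset.mem_univ i), hdiagabs]
  have hsplit : ((ρ * ρ).trace).re = Sdiag + Soff := by
    rw [htrace2]
    simp only [hsplit1]
    rw [Finset.sum_add_distrib, hSdiag, hSoff]
  -- diagonal Cauchy-Schwarz : 1 ≤ D * Sdiag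
  have htrre : ∑ i, (ρ i i).re = 1 := by
    have h : (ρ.trace).re = 1 := by rw [htr]; simp
    rw [← h]
    simp [Matrix.trace, Matrix.diag, Complex.re_sum]
  have hdiagCS : 1 ≤ D * Sdiag := by
    have := sq_sum_le_card_mul_sum_sq (s := Finset.univ) (f := fun i : Fin d => (ρ i i).re)
    rw [htrre] at this
    simpa [hSdiag, hD] using this
  -- off-diagonal Cauchy-Schwarz : C² ≤ D(D-1) Soff
  have hCoff : C = ∑ p ∈ Finset.univ.offDiag, ‖ρ p.1 p.2‖ := by
    rw [hC, l1Coherence, (show (Finset.univ : Finset (Fin d)).offDiag = (Finset.univ ×ˢ Finset.univ).filter (fun a => a.1 ≠ a.2) from by ext; simp), Finset.sum_filter, Finset.sum_product]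
    exact Finset.sum_congr rfl fun i _ => Finset.sum_congr rfl fun j _ => by
      by_cases h : i = j <;> simp [h]
  have hSoffeq : Soff = ∑ p ∈ Finset.univ.offDiag, ‖ρ p.1 p.2‖ ^ 2 := by
    rw [hSoff, (show (Finset.univ : Finset (Fin d)).offDiag = (Finset.univ ×ˢ Finset.univ).filter (fun a => a.1 ≠ a.2) from by ext; simp), Finset.sum_filter, Finset.sum_product]
    exact Finset.sum_congr rfl fun i _ => Finset.sum_congr rfl fun j _ => by
      by_cases h : i = j <;> simp [h]
  have hcard : ((Finset.univ : Finset (Fin d)).offDiag.card : ℝ) = D * (D - 1) := by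
    rw [Finset.offDiag_card]
    simp only [Finset.card_univ, Fintype.card_fin]
    have h' : d ≤ d * d := Nat.le_mul_of_pos_left d (by omega)
    push_cast [Nat.cast_sub h']
    ring
  have hoffCS : C ^ 2 ≤ D * (D - 1) * Soff := by
    have h := sq_sum_le_card_mul_sum_sq (s := Finset.univ.offDiag)
      (f := fun p : Fin d × Fin d => ‖ρ p.1 p.2‖)
    rw [← hCoff, ← hSoffeq] at h
    calc C ^ 2 ≤ ((Finset.univ : Finset (Fin d)).offDiag.card : ℝ) * Soff := h
      _ = D * (D - 1) * Soff := by rw [hcard]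
  -- combine
  rw [mixedness, hsplit, ← hD]
  have key : C ^ 2 + D * (D - 1) * (1 - (Sdiag + Soff)) ≤ (D - 1) ^ 2 := by
    nlinarith [mul_le_mul_of_nonneg_left hdiagCS hD1.le]
  rw [div_add' _ _ _ (by positivity), div_le_one (by positivity)]
  calc C ^ 2 + D / (D - 1) * (1 - (Sdiag + Soff)) * (D - 1) ^ 2
      = C ^ 2 + D * (D - 1) * (1 - (Sdiag + Soff)) := by
        field_simp
    _ ≤ (D - 1) ^ 2 := key
end

section
/- Let d ≥ 2 and let ρ be a density matrix on ℂ^d. Then the following strengthened trade-off holds: C(ρ)²/(d-1)² + M(ρ) ≤ 1 − (d/(d-1))·(Σ_{i=1}^{d} ρ_{ii}² − 1/d), where C(ρ) is the l1-norm of coherence and M(ρ) is the mixedness. (Note that Σ_i ρ_{ii}² ≥ 1/d by Cauchy–Schwarz, so this refines the bound C(ρ)²/(d-1)² + M(ρ) ≤ 1 by a term measuring the deviation of the diagonal of ρ from the uniform distribution.) -/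
open scoped ComplexOrder

/-- **Strengthened coherence–mixedness trade-off.**  For any density matrix `ρ` on `ℂ^d`
(`d ≥ 2`), `C(ρ)²/(d-1)² + M(ρ) ≤ 1 - (d/(d-1)) (∑ᵢ ρᵢᵢ² - 1/d)`. -/
theorem coherence_mixedness_tradeoff_strong {d : ℕ} (hd : 2 ≤ d)
    (ρ : Matrix (Fin d) (Fin d) ℂ) (hpsd : ρ.PosSemidef) (htr : ρ.trace = 1) :
    l1Coherence ρ ^ 2 / ((d : ℝ) - 1) ^ 2 + mixedness d ρ ≤
      1 - ((d : ℝ) / ((d : ℝ) - 1)) * ((∑ i, (ρ i i).re ^ 2) - 1 / (d : ℝ)) := by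
  have hherm : ρ.IsHermitian := hpsd.1
  have hconj : ∀ i j, ρ j i = (starRingEnd ℂ) (ρ i j) := by
    intro i j
    have := congrFun (congrFun hherm.symm j) i
    simpa [Matrix.conjTranspose_apply] using this
  have hn1 : (1:ℝ) < (d:ℝ) := by exact_mod_cast lt_of_lt_of_le one_lt_two hd
  have hn1' : (0:ℝ) < (d:ℝ) - 1 := by linarith
  have hn0 : (0:ℝ) < (d:ℝ) := by linarith
  set n : ℝ := (d:ℝ) with hn
  set S : ℝ := ∑ i, ∑ j, if i = j then 0 else ‖ρ i j‖ ^ 2 with hSdef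
  set D : ℝ := ∑ i, (ρ i i).re ^ 2 with hDdef
  -- trace of ρ² equals D + S
  have htrace : ((ρ * ρ).trace).re = D + S := by
    have h1 : ((ρ * ρ).trace) = ∑ i, ∑ j, ρ i j * ρ j i := by
      simp [Matrix.trace, Matrix.mul_apply, Matrix.diag]
    have h2 : ∀ i j : Fin d, (ρ i j * ρ j i).re = ‖ρ i j‖ ^ 2 := by
      intro i j
      rw [hconj i j, Complex.mul_conj]
      simp [Complex.sq_norm]
    rw [h1, Complex.re_sum]
    have key : ∀ i : Fin d, (∑ j, ρ i j * ρ j i).re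
        = (ρ i i).re ^ 2 + ∑ j, (if i = j then 0 else ‖ρ i j‖ ^ 2) := by
      intro i
      rw [Complex.re_sum]
      have hi : (ρ i i).im = 0 := by
        have h := congrArg Complex.im (hconj i i)
        simp [Complex.conj_im] at h
        linarith
      have hdiag : (∑ j : Fin d, if j = i then (ρ i j).re ^ 2 else 0) = (ρ i i).re ^ 2 := by
        simp [Finset.sum_ite_eq' Finset.univ i (fun j => (ρ i j).re ^ 2)]
      rw [← hdiag, ← Finset.sum_add_distrib]
      apply Finset.sum_congr rfl
      intro j _
      by_cases h : i = j
      · subst h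
        simp [Complex.mul_re, hi]
        ring
      · rw [h2 i j]
        simp [Ne.symm h, h]
    rw [Finset.sum_congr rfl (fun i _ => key i), Finset.sum_add_distrib]
  have hSnonneg : 0 ≤ S := by
    apply Finset.sum_nonneg
    intro i _
    apply Finset.sum_nonneg
    intro j _
    positivity
  -- Cauchy–Schwarz : C² ≤ n(n-1) S
  have hCS : l1Coherence ρ ^ 2 ≤ (n * (n - 1)) * S := by
    set s : Finset (Fin d × Fin d) :=
      (Finset.univ ×ˢ Finset.univ).filter (fun p => p.1 ≠ p.2) with hs
    have hC : l1Coherence ρ = ∑ p ∈ s, ‖ρ p.1 p.2‖ := by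
      rw [hs, Finset.sum_filter, Finset.sum_product, l1Coherence]
      apply Finset.sum_congr rfl
      intro i _
      apply Finset.sum_congr rfl
      intro j _
      by_cases h : i = j <;> simp [h]
    have hS2 : S = ∑ p ∈ s, ‖ρ p.1 p.2‖ ^ 2 := by
      rw [hs, Finset.sum_filter, Finset.sum_product, hSdef]
      apply Finset.sum_congr rfl
      intro i _
      apply Finset.sum_congr rfl
      intro j _
      by_cases h : i = j <;> simp [h]
    have hcard : (s.card : ℝ) = n * (n - 1) := by
      have : (s.card : ℝ) = ∑ p ∈ s, (1 : ℝ) := by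
        rw [Finset.sum_const]; simp
      rw [this, hs, Finset.sum_filter, Finset.sum_product]
      have hrow : ∀ i : Fin d, (∑ j : Fin d, if i ≠ j then (1:ℝ) else 0) = n - 1 := by
        intro i
        have : (∑ j : Fin d, if i ≠ j then (1:ℝ) else 0)
            = ∑ j : Fin d, ((1:ℝ) - if i = j then 1 else 0) := by
          apply Finset.sum_congr rfl
          intro j _
          by_cases h : i = j <;> simp [h]
        rw [this, Finset.sum_sub_distrib, Finset.sum_ite_eq]
        simp [hn]
      rw [Finset.sum_congr rfl (fun i _ => hrow i), Finset.sum_const]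
      simp [hn]
    have := sq_sum_le_card_mul_sum_sq (s := s)
      (f := fun p : Fin d × Fin d => ‖ρ p.1 p.2‖)
    rw [← hC, ← hS2, hcard] at this
    exact this
  -- finish with algebra
  have hkey : l1Coherence ρ ^ 2 / (n - 1) ^ 2 ≤ n / (n - 1) * S := by
    rw [div_le_iff₀ (by positivity)]
    have : n / (n - 1) * S * (n - 1) ^ 2 = n * (n - 1) * S := by
      field_simp
    rw [this]
    exact hCS
  have halg : n / (n - 1) * (1 - (D + S))
      = 1 - n / (n - 1) * (D - 1 / n) - n / (n - 1) * S := by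
    field_simp
    ring
  rw [mixedness, ← hn, htrace, halg]
  linarith
end

section
/- Let ρ be a 2×2 density matrix, written as ρ = [[a, c],[c̄, 1−a]] with a real, 0 ≤ a ≤ 1, and |c|² ≤ a(1−a). Then C(ρ)² + M(ρ) = 4a(1−a) ≤ 1, where C(ρ) = 2|c| is the l1-norm of coherence and M(ρ) = 2(1 − Tr(ρ²)) = 4a(1−a) − 4|c|² is the mixedness; moreover equality C(ρ)² + M(ρ) = 1 holds if and only if a = 1/2. -/
open scoped ComplexOrder

/-- **Coherence–mixedness trade-off for qubits.**  For a qubit density matrix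
`ρ = !![a, c; conj c, 1 - a]` (with `a` real, `0 ≤ a ≤ 1`, `|c|² ≤ a(1-a)`) one has
`C(ρ) = 2|c|`, `M(ρ) = 4a(1-a) - 4|c|²`, hence `C(ρ)² + M(ρ) = 4a(1-a) ≤ 1`, with
`C(ρ)² + M(ρ) = 1` if and only if `a = 1/2`. -/
theorem qubit_coherence_mixedness_tradeoff (a : ℝ) (c : ℂ)
    (ha0 : 0 ≤ a) (ha1 : a ≤ 1) (hc : ‖c‖ ^ 2 ≤ a * (1 - a))
    (ρ : Matrix (Fin 2) (Fin 2) ℂ)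
    (hρ : ρ = !![(a : ℂ), c; (starRingEnd ℂ) c, 1 - (a : ℂ)]) :
    l1Coherence ρ = 2 * ‖c‖ ∧
    mixedness 2 ρ = 4 * a * (1 - a) - 4 * ‖c‖ ^ 2 ∧
    l1Coherence ρ ^ 2 + mixedness 2 ρ = 4 * a * (1 - a) ∧
    4 * a * (1 - a) ≤ 1 ∧
    (l1Coherence ρ ^ 2 + mixedness 2 ρ = 1 ↔ a = 1 / 2) := by
  subst hρ
  have hC : l1Coherence !![(a : ℂ), c; (starRingEnd ℂ) c, 1 - (a : ℂ)] = 2 * ‖c‖ := by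
    simp [l1Coherence, Fin.sum_univ_two, Complex.norm_conj]
    ring
  have htr : (((!![(a : ℂ), c; (starRingEnd ℂ) c, 1 - (a : ℂ)]) *
      (!![(a : ℂ), c; (starRingEnd ℂ) c, 1 - (a : ℂ)])).trace).re
      = a^2 + (1-a)^2 + 2 * ‖c‖ ^ 2 := by
    simp [Matrix.trace_fin_two, Matrix.mul_apply, Fin.sum_univ_two, Complex.add_re,
      Complex.mul_re, Complex.sub_re, Complex.ofReal_re, Complex.ofReal_im,
      Complex.conj_re, Complex.conj_im]
    rw [Complex.sq_norm]
    simp [Complex.normSq_apply]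
    ring
  have hM : mixedness 2 (!![(a : ℂ), c; (starRingEnd ℂ) c, 1 - (a : ℂ)])
      = 4 * a * (1 - a) - 4 * ‖c‖ ^ 2 := by
    rw [mixedness, htr]; norm_num; ring
  refine ⟨hC, hM, by rw [hC, hM]; ring, by nlinarith [sq_nonneg (1 - 2*a)], ?_⟩
  rw [hC, hM]
  constructor
  · intro h; nlinarith [sq_nonneg (1 - 2*a)]
  · intro h; rw [h]; ring
end

section
/- Let d ≥ 2 and 0 ≤ p ≤ 1. Define the maximally coherent mixed state ρ_m = ((1−p)/d)·I_d + p·|ψ_d⟩⟨ψ_d|, where |ψ_d⟩ = (1/√d)·Σ_{i=1}^{d} |i⟩ is the maximally coherent pure state; equivalently, ρ_m is the d×d matrix whose diagonal entries all equal 1/d and whose off-diagonal entries all equal p/d. Then ρ_m is a density matrix (positive semidefinite with trace 1), its l1-norm of coherence is C(ρ_m) = (d−1)p, its mixedness is M(ρ_m) = 1 − p², and it satisfies the complementarity relation C(ρ_m)²/(d−1)² + M(ρ_m) = 1. -/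
open scoped ComplexOrder

/-- The maximally coherent mixed state `ρ_m = ((1-p)/d) I + p |ψ_d⟩⟨ψ_d|`:
diagonal entries all `1/d`, off-diagonal entries all `p/d`. -/
noncomputable def mcms (d : ℕ) (p : ℝ) : Matrix (Fin d) (Fin d) ℂ :=
  Matrix.of fun i j => if i = j then (1 / d : ℂ) else ((p : ℂ) / d)

open Matrix in
lemma sum_ite_row {R : Type*} [CommRing R] {d : ℕ} (i : Fin d) (a b : R) :
    ∑ j : Fin d, (if i = j then a else b) = (d : R) * b + (a - b) := by
  have h : ∀ j : Fin d, (if i = j then a else b) = b + (if i = j then a - b else 0) := by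
    intro j; split_ifs <;> ring
  simp only [h, Finset.sum_add_distrib, Finset.sum_const, Finset.card_univ, Fintype.card_fin,
    nsmul_eq_mul, Finset.sum_ite_eq, Finset.mem_univ, if_true]

open Matrix in
/-- **Maximally coherent mixed states.**  For `d ≥ 2` and `0 ≤ p ≤ 1`, the state
`ρ_m = ((1-p)/d) I + p |ψ_d⟩⟨ψ_d|` is a density matrix with coherence `C(ρ_m) = (d-1)p`
and mixedness `M(ρ_m) = 1 - p²`, saturating the complementarity relation
`C(ρ_m)²/(d-1)² + M(ρ_m) = 1`. -/
theorem mcms_complementarity {d : ℕ} (hd : 2 ≤ d) (p : ℝ) (hp0 : 0 ≤ p) (hp1 : p ≤ 1) :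
    (mcms d p).PosSemidef ∧
    (mcms d p).trace = 1 ∧
    l1Coherence (mcms d p) = ((d : ℝ) - 1) * p ∧
    mixedness d (mcms d p) = 1 - p ^ 2 ∧
    l1Coherence (mcms d p) ^ 2 / ((d : ℝ) - 1) ^ 2 + mixedness d (mcms d p) = 1 := by
  have hd0 : (0 : ℕ) < d := by omega
  have hdR : (0 : ℝ) < (d : ℝ) := by exact_mod_cast hd0
  have hdR0 : ((d : ℝ)) ≠ 0 := ne_of_gt hdR
  have hdC0 : ((d : ℂ)) ≠ 0 := by exact_mod_cast hdR0
  have hd1 : ((d : ℝ) - 1) ≠ 0 := by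
    have : (2 : ℝ) ≤ (d : ℝ) := by exact_mod_cast hd
    linarith
  -- trace of ρ
  have htr : (mcms d p).trace = 1 := by
    simp only [Matrix.trace, Matrix.diag, mcms, Matrix.of_apply, if_pos rfl, ↓reduceIte,
      Finset.sum_const, Finset.card_univ, Fintype.card_fin, nsmul_eq_mul]
    field_simp
  -- l1 coherence
  have hC : l1Coherence (mcms d p) = ((d : ℝ) - 1) * p := by
    have hterm : ∀ i j : Fin d,
        (if i = j then (0 : ℝ) else ‖mcms d p i j‖) =
        (if i = j then 0 else p / d) := by
      intro i j
      split_ifs with h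
      · rfl
      · simp [mcms, Matrix.of_apply, if_neg h, norm_div, Complex.norm_real,
          Complex.norm_natCast, Real.norm_eq_abs, abs_of_nonneg hp0]
    simp only [l1Coherence, hterm]
    have hrow : ∀ i : Fin d, ∑ j : Fin d, (if i = j then (0 : ℝ) else p / d) =
        (d : ℝ) * (p / d) + (0 - p / d) := fun i => sum_ite_row i 0 (p / d)
    simp only [hrow, Finset.sum_const, Finset.card_univ, Fintype.card_fin, nsmul_eq_mul]
    field_simp
    ring
  -- trace of ρ²
  have htr2 : ((mcms d p * mcms d p).trace).re = 1 / d + ((d : ℝ) - 1) * p ^ 2 / d := by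
    have hent : ∀ i j : Fin d, mcms d p i j * mcms d p j i =
        (if i = j then ((1 / d : ℂ)) ^ 2 else ((p : ℂ) / d) ^ 2) := by
      intro i j
      by_cases h : i = j
      · simp [mcms, h, sq]
      · simp [mcms, Matrix.of_apply, if_neg h, if_neg (Ne.symm h), sq]
    have : (mcms d p * mcms d p).trace =
        ((1 / d + ((d : ℝ) - 1) * p ^ 2 / d : ℝ) : ℂ) := by
      simp only [Matrix.trace, Matrix.diag, Matrix.mul_apply, hent]
      have hrow : ∀ i : Fin d, ∑ j : Fin d,
          (if i = j then ((1 / d : ℂ)) ^ 2 else ((p : ℂ) / d) ^ 2) =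
          (d : ℂ) * (((p : ℂ) / d) ^ 2) + (((1 / d : ℂ)) ^ 2 - ((p : ℂ) / d) ^ 2) :=
        fun i => sum_ite_row i _ _
      simp only [hrow, Finset.sum_const, Finset.card_univ, Fintype.card_fin, nsmul_eq_mul]
      push_cast
      field_simp
      ring
    rw [this, Complex.ofReal_re]
  have hM : mixedness d (mcms d p) = 1 - p ^ 2 := by
    rw [mixedness, htr2]
    field_simp
    ring
  -- positive semidefiniteness
  have hPSD : (mcms d p).PosSemidef := by
    rw [Matrix.posSemidef_iff_dotProduct_mulVec]
    constructor
    · ext i j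
      simp only [Matrix.conjTranspose_apply, mcms, Matrix.of_apply]
      by_cases h : i = j
      · simp [h]
      · simp [if_neg h, if_neg (Ne.symm h), map_div₀]
    · intro x
      set S : ℂ := ∑ j, x j with hS
      have hrow : ∀ i : Fin d, (mcms d p *ᵥ x) i =
          ((p : ℂ) / d) * S + ((1 - (p : ℂ)) / d) * x i := by
        intro i
        simp only [Matrix.mulVec, dotProduct, mcms, Matrix.of_apply]
        have h : ∀ j : Fin d, (if i = j then (1 / d : ℂ) else (p : ℂ) / d) * x j =
            ((p : ℂ) / d) * x j + (if i = j then ((1 - (p : ℂ)) / d) * x j else 0) := by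
          intro j
          split_ifs with h
          · field_simp; ring
          · ring
        simp only [h, Finset.sum_add_distrib, Finset.sum_ite_eq, Finset.mem_univ, if_true,
          ← Finset.mul_sum, hS]
      have key : star x ⬝ᵥ (mcms d p *ᵥ x) =
          ((p / d * Complex.normSq S
            + (1 - p) / d * ∑ i, Complex.normSq (x i) : ℝ) : ℂ) := by
        simp only [dotProduct, Pi.star_apply, hrow]
        have hexp : ∀ i : Fin d,
            (starRingEnd ℂ) (x i) * (((p : ℂ) / d) * S + ((1 - (p : ℂ)) / d) * x i) =
            ((p : ℂ) / d) * ((starRingEnd ℂ) (x i) * S)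
              + ((1 - (p : ℂ)) / d) * ((starRingEnd ℂ) (x i) * x i) := by
          intro i; ring
        simp only [RCLike.star_def, hexp, Finset.sum_add_distrib, ← Finset.mul_sum]
        have h1 : ∑ i, (starRingEnd ℂ) (x i) * S = (starRingEnd ℂ) S * S := by
          rw [← Finset.sum_mul, hS, map_sum]
        have h2 : ∀ i : Fin d, (starRingEnd ℂ) (x i) * x i = (Complex.normSq (x i) : ℂ) := by
          intro i; rw [Complex.normSq_eq_conj_mul_self]
        rw [h1, ← Complex.normSq_eq_conj_mul_self]
        simp only [h2]
        push_cast
        ring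
      rw [key]
      rw [Complex.zero_le_real]
      have h1 : 0 ≤ p / d * Complex.normSq S :=
        mul_nonneg (div_nonneg hp0 hdR.le) (Complex.normSq_nonneg _)
      have h2 : 0 ≤ (1 - p) / d * ∑ i, Complex.normSq (x i) := by
        apply mul_nonneg
        · apply div_nonneg <;> linarith
        · exact Finset.sum_nonneg fun i _ => Complex.normSq_nonneg _
      linarith
  refine ⟨hPSD, htr, hC, hM, ?_⟩
  rw [hC, hM]
  field_simp
  ring
end

section
/- Let d ≥ 2 and let ρ be a density matrix on ℂ^d attaining equality in the coherence–mixedness trade-off, i.e. C(ρ)²/(d−1)² + M(ρ) = 1, where C(ρ) is the l1-norm of coherence and M(ρ) is the mixedness. Then every diagonal entry of ρ equals 1/d, and every off-diagonal entry of ρ has modulus √(1 − M(ρ))/d. -/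
open scoped ComplexOrder

/-- Split off the diagonal term from a sum. -/
lemma sum_split_aux {d : ℕ} (i : Fin d) (f : Fin d → ℝ) :
    ∑ j, f j = f i + ∑ j, if i = j then 0 else f j := by
  have h : ∀ j, f j = (if i = j then f j else 0) + (if i = j then 0 else f j) := by
    intro j; split_ifs <;> simp
  rw [Finset.sum_congr rfl (fun j _ => h j), Finset.sum_add_distrib, Finset.sum_ite_eq]
  simp

/-- **Structure of states saturating the coherence–mixedness trade-off.**
If a density matrix `ρ` on `ℂ^d` (`d ≥ 2`) attains equality
`C(ρ)²/(d-1)² + M(ρ) = 1`, then all its diagonal entries equal `1/d` and all its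
off-diagonal entries have modulus `√(1 - M(ρ))/d`. -/
theorem eq_tradeoff_implies_mcms_form {d : ℕ} (hd : 2 ≤ d)
    (ρ : Matrix (Fin d) (Fin d) ℂ) (hpsd : ρ.PosSemidef) (htr : ρ.trace = 1)
    (heq : l1Coherence ρ ^ 2 / ((d : ℝ) - 1) ^ 2 + mixedness d ρ = 1) :
    (∀ i, ρ i i = (1 / d : ℂ)) ∧
    (∀ i j, i ≠ j → ‖ρ i j‖ = Real.sqrt (1 - mixedness d ρ) / d) := by
  classical
  have herm : ρ.IsHermitian := hpsd.1
  set n : ℝ := (d : ℝ) with hn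
  have hn2 : (2:ℝ) ≤ n := by rw [hn]; exact_mod_cast hd
  have hn1 : (0:ℝ) < n - 1 := by linarith
  have hnpos : (0:ℝ) < n := by linarith
  set b : Fin d → Fin d → ℝ := fun i j => ‖ρ i j‖ with hb
  set a : Fin d → ℝ := fun i => (ρ i i).re with ha
  -- diagonal entries are real
  have hdiag : ∀ i, ρ i i = (a i : ℂ) := by
    intro i
    have h := herm.apply i i
    have him : (ρ i i).im = 0 := Complex.conj_eq_iff_im.mp h
    exact Complex.ext (Complex.ofReal_re _).symm (by simp [him])
  -- trace condition on the diagonal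
  have hsuma : ∑ i, a i = 1 := by
    have h1 : (ρ.trace).re = 1 := by rw [htr]; simp
    have h2 : (ρ.trace).re = ∑ i, a i := by
      simp [Matrix.trace, Matrix.diag, Complex.re_sum, ha]
    linarith [h2 ▸ h1]
  set A : ℝ := ∑ i, (a i)^2 with hA
  set S : ℝ := ∑ i, ∑ j, if i = j then 0 else (b i j)^2 with hS
  set C : ℝ := l1Coherence ρ with hC
  have hCdef : C = ∑ i, ∑ j, if i = j then 0 else b i j := rfl
  have hCnn : 0 ≤ C := by
    rw [hCdef]
    refine Finset.sum_nonneg fun i _ => Finset.sum_nonneg fun j _ => ?_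
    split_ifs <;> positivity
  -- the trace of ρ² is the sum of squared moduli
  have hentry : ∀ i j : Fin d, ρ i j * ρ j i = (((b i j)^2 : ℝ) : ℂ) := by
    intro i j
    rw [← herm.apply j i, show star (ρ i j) = (starRingEnd ℂ) (ρ i j) from rfl,
      Complex.mul_conj]
    norm_cast
    rw [Complex.sq_norm]
  have hT : ((ρ * ρ).trace).re = A + S := by
    have h1 : (ρ * ρ).trace = ((∑ i, ∑ j, (b i j)^2 : ℝ) : ℂ) := by
      rw [Matrix.trace]
      simp only [Matrix.diag_apply, Matrix.mul_apply, hentry]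
      push_cast
      rfl
    rw [h1, Complex.ofReal_re]
    have h2 : ∀ i : Fin d, ∑ j, (b i j)^2 = (a i)^2 + ∑ j, if i = j then 0 else (b i j)^2 := by
      intro i
      have h3 : (b i i)^2 = (a i)^2 := by
        show (‖ρ i i‖)^2 = _
        rw [hdiag i, Complex.norm_real, Real.norm_eq_abs, sq_abs]
      rw [sum_split_aux i (fun j => (b i j)^2), h3]
    rw [Finset.sum_congr rfl (fun i _ => h2 i), Finset.sum_add_distrib, ← hA, ← hS]
  -- count of off-diagonal entries
  set N : ℝ := n^2 - n with hN
  have hNpos : 0 < N := by rw [hN]; nlinarith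
  have hcount : ∑ i : Fin d, ∑ j : Fin d, (if i = j then (0:ℝ) else 1) = N := by
    have h1 : ∀ i : Fin d, ∑ j, (if i = j then (0:ℝ) else 1) = n - 1 := by
      intro i
      have := sum_split_aux i (fun _ => (1:ℝ))
      simp only [Finset.sum_const, Finset.card_univ, Fintype.card_fin, nsmul_eq_mul,
        mul_one] at this
      rw [← hn] at this
      linarith
    rw [Finset.sum_congr rfl (fun i _ => h1 i), Finset.sum_const, Finset.card_univ,
      Fintype.card_fin, nsmul_eq_mul, ← hn, hN]
    ring
  -- Cauchy-Schwarz on the off-diagonal entries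
  have hCS1 : C^2 ≤ S * N := by
    have h := Finset.sum_mul_sq_le_sq_mul_sq Finset.univ
      (fun p : Fin d × Fin d => if p.1 = p.2 then (0:ℝ) else b p.1 p.2)
      (fun p : Fin d × Fin d => if p.1 = p.2 then (0:ℝ) else 1)
    have e1 : ∑ p : Fin d × Fin d,
        ((if p.1 = p.2 then (0:ℝ) else b p.1 p.2) * (if p.1 = p.2 then (0:ℝ) else 1)) = C := by
      rw [Fintype.sum_prod_type, hCdef]
      exact Finset.sum_congr rfl fun i _ => Finset.sum_congr rfl fun j _ => by
        split_ifs <;> ring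
    have e2 : ∑ p : Fin d × Fin d, (if p.1 = p.2 then (0:ℝ) else b p.1 p.2)^2 = S := by
      rw [Fintype.sum_prod_type, hS]
      exact Finset.sum_congr rfl fun i _ => Finset.sum_congr rfl fun j _ => by
        split_ifs <;> ring
    have e3 : ∑ p : Fin d × Fin d, (if p.1 = p.2 then (0:ℝ) else (1:ℝ))^2 = N := by
      rw [Fintype.sum_prod_type, ← hcount]
      exact Finset.sum_congr rfl fun i _ => Finset.sum_congr rfl fun j _ => by
        split_ifs <;> ring
    rw [e1, e2, e3] at h
    exact h
  -- Cauchy-Schwarz on the diagonal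
  have hCS2 : 1 ≤ A * n := by
    have h := Finset.sum_mul_sq_le_sq_mul_sq Finset.univ a (fun _ => (1:ℝ))
    have h1 : ∑ i, a i * 1 = 1 := by simpa using hsuma
    have h2 : ∑ _i : Fin d, (1:ℝ)^2 = n := by
      simp [Finset.card_univ, hn]
    rw [h1, h2, ← hA] at h
    simpa using h
  -- key algebraic identity from the saturation hypothesis
  have h1M : 1 - mixedness d ρ = C^2/(n-1)^2 := by linarith
  have hM : mixedness d ρ = (n/(n-1)) * (1 - (A+S)) := by
    rw [mixedness, hT, hn]
  have hne : n - 1 ≠ 0 := ne_of_gt hn1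
  have habs : ∀ i j : Fin d, ‖ρ i j‖ = b i j := fun _ _ => rfl
  clear_value n b a A S C N
  have hkey : C^2 = (n-1)*(n*(A+S)-1) := by
    rw [hM] at heq
    field_simp at heq
    have h2 : (n-1) * (C^2) = (n-1) * ((n-1)*(n*(A+S)-1)) := by linear_combination (n-1) * heq
    exact mul_left_cancel₀ hne h2
  have hCS1' : C^2 ≤ S*(n^2-n) := by rw [← hN]; exact hCS1
  have hSA : n * A ≤ 1 := by nlinarith [hCS1', hkey, hn1]
  have hAeq : n * A = 1 := le_antisymm hSA (by linarith)
  -- all diagonal entries equal 1/d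
  have hdiagsum : ∑ i, (a i - 1/n)^2 = 0 := by
    have h1 : ∑ i, (a i - 1/n)^2 = ∑ i, ((a i)^2 - (2/n)*(a i) + (1/n)^2) :=
      Finset.sum_congr rfl fun i _ => by ring
    rw [h1, Finset.sum_add_distrib, Finset.sum_sub_distrib, ← Finset.mul_sum, hsuma, ← hA,
      Finset.sum_const, Finset.card_univ, Fintype.card_fin, nsmul_eq_mul, ← hn]
    field_simp
    linear_combination hAeq
  have hai : ∀ i, a i = 1/n := by
    intro i
    have h := (Finset.sum_eq_zero_iff_of_nonneg (fun i _ => sq_nonneg _)).mp hdiagsum i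
      (Finset.mem_univ i)
    have h2 := (pow_eq_zero_iff two_ne_zero).mp h
    linarith
  -- all off-diagonal moduli equal C/N
  have hSeq : C^2 = S * N := by
    rw [hkey, hN]
    linear_combination (n - 1) * hAeq
  set m : ℝ := C / N with hm
  have hoffsum : ∑ i, ∑ j, (if i = j then (0:ℝ) else (b i j - m)^2) = 0 := by
    have h1 : ∀ i : Fin d, ∑ j, (if i = j then (0:ℝ) else (b i j - m)^2)
        = (∑ j, if i = j then (0:ℝ) else (b i j)^2)
          - (2*m)*(∑ j, if i = j then (0:ℝ) else b i j)
          + m^2*(∑ j, if i = j then (0:ℝ) else 1) := by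
      intro i
      rw [Finset.mul_sum, Finset.mul_sum, ← Finset.sum_sub_distrib, ← Finset.sum_add_distrib]
      exact Finset.sum_congr rfl fun j _ => by split_ifs <;> ring
    rw [Finset.sum_congr rfl (fun i _ => h1 i), Finset.sum_add_distrib,
      Finset.sum_sub_distrib, ← Finset.mul_sum, ← Finset.mul_sum, ← hS, ← hCdef, hcount, hm]
    have hNne : N ≠ 0 := ne_of_gt hNpos
    field_simp
    linear_combination (-1) * hSeq
  have hbij : ∀ i j : Fin d, i ≠ j → b i j = m := by
    intro i j hij
    have hnn : ∀ i : Fin d, ∀ _ : i ∈ Finset.univ,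
        0 ≤ ∑ j, (if i = j then (0:ℝ) else (b i j - m)^2) := by
      intro i _
      refine Finset.sum_nonneg fun j _ => ?_
      split_ifs <;> positivity
    have h1 := (Finset.sum_eq_zero_iff_of_nonneg hnn).mp hoffsum i (Finset.mem_univ i)
    have hnn2 : ∀ j : Fin d, ∀ _ : j ∈ Finset.univ,
        0 ≤ (if i = j then (0:ℝ) else (b i j - m)^2) := by
      intro j _; split_ifs <;> positivity
    have h2 := (Finset.sum_eq_zero_iff_of_nonneg hnn2).mp h1 j (Finset.mem_univ j)
    rw [if_neg hij] at h2
    have h3 := (pow_eq_zero_iff two_ne_zero).mp h2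
    linarith
  constructor
  · intro i
    rw [hdiag i, hai i, hn]
    push_cast
    ring
  · intro i j hij
    have hbm : ‖ρ i j‖ = m := (habs i j).trans (hbij i j hij)
    have hsq : Real.sqrt (1 - mixedness d ρ) = C/(n-1) := by
      rw [h1M, ← div_pow]
      exact Real.sqrt_sq (div_nonneg hCnn (le_of_lt hn1))
    rw [hbm, hsq, hm, hN, div_div]
    congr 1
    ring
end

section
/- Let d ≥ 2, let 0 ≤ p ≤ 1, and let ρ be a density matrix on ℂ^d such that every diagonal entry of ρ equals 1/d and every off-diagonal entry of ρ has modulus p/d. Then C(ρ) = (d−1)p and M(ρ) = 1 − p², so ρ attains equality in the coherence–mixedness trade-off: C(ρ)²/(d−1)² + M(ρ) = 1. -/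
open scoped ComplexOrder

/-- **States of MCMS form saturate the coherence–mixedness trade-off.**
If a density matrix `ρ` on `ℂ^d` (`d ≥ 2`) has all diagonal entries equal to `1/d` and all
off-diagonal entries of modulus `p/d` (for some `0 ≤ p ≤ 1`), then `C(ρ) = (d-1)p`,
`M(ρ) = 1 - p²`, and `C(ρ)²/(d-1)² + M(ρ) = 1`. -/
theorem mcms_form_attains_equality {d : ℕ} (hd : 2 ≤ d) (p : ℝ) (hp0 : 0 ≤ p) (hp1 : p ≤ 1)
    (ρ : Matrix (Fin d) (Fin d) ℂ) (hpsd : ρ.PosSemidef) (htr : ρ.trace = 1)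
    (hdiag : ∀ i, ρ i i = (1 / d : ℂ))
    (hoff : ∀ i j, i ≠ j → ‖ρ i j‖ = p / d) :
    l1Coherence ρ = ((d : ℝ) - 1) * p ∧
    mixedness d ρ = 1 - p ^ 2 ∧
    l1Coherence ρ ^ 2 / ((d : ℝ) - 1) ^ 2 + mixedness d ρ = 1 := by
  have hdR : (2:ℝ) ≤ (d:ℝ) := by exact_mod_cast hd
  have hd0 : (d:ℝ) ≠ 0 := by linarith
  have hd1 : (d:ℝ) - 1 ≠ 0 := by linarith
  have hC : l1Coherence ρ = ((d : ℝ) - 1) * p := by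
    unfold l1Coherence
    have h1 : ∀ i j : Fin d, (if i = j then (0:ℝ) else ‖ρ i j‖)
        = p/d - (if i = j then p/d else 0) := by
      intro i j
      by_cases h : i = j
      · simp [h]
      · simp [h, hoff i j h]
    simp_rw [h1, Finset.sum_sub_distrib, Finset.sum_ite_eq, Finset.sum_const,
      Finset.card_univ, Fintype.card_fin, nsmul_eq_mul]
    simp only [Finset.mem_univ, if_true]
    simp only [Finset.sum_const, Finset.card_univ, Fintype.card_fin, nsmul_eq_mul]
    field_simp
  have hM : mixedness d ρ = 1 - p ^ 2 := by
    have htrace : ((ρ * ρ).trace).re = 1/(d:ℝ) + ((d:ℝ)-1) * p^2 / d := by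
      have herm := hpsd.1
      have happ : ∀ i j, ρ j i = (starRingEnd ℂ) (ρ i j) := by
        intro i j
        rw [← herm.apply i j]
        simp [Matrix.conjTranspose_apply]
      have : (ρ * ρ).trace = ∑ i, ∑ j, ρ i j * ρ j i := by
        simp [Matrix.trace, Matrix.mul_apply, Matrix.diag]
      rw [this]
      have h2 : ∀ i j : Fin d, ρ i j * ρ j i
          = ((if i = j then (1/(d:ℝ))^2 else (p/d)^2 : ℝ) : ℂ) := by
        intro i j
        rw [happ i j, Complex.mul_conj, ← Complex.sq_norm]
        by_cases h : i = j
        · rw [h, hdiag j]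
          simp [map_div₀]
        · rw [hoff i j h]
          simp [h]
      simp_rw [h2]
      rw [show (∑ i, ∑ j, (((if i = j then (1/(d:ℝ))^2 else (p/d)^2 : ℝ)):ℂ))
          = ((∑ i, ∑ j, (if i = j then (1/(d:ℝ))^2 else (p/d)^2) : ℝ) : ℂ) by
        push_cast; rfl, Complex.ofReal_re]
      have h3 : ∀ i j : Fin d, (if i = j then (1/(d:ℝ))^2 else (p/d)^2)
          = (p/d)^2 + (if i = j then (1/(d:ℝ))^2 - (p/d)^2 else 0) := by
        intro i j; split <;> ring
      simp_rw [h3, Finset.sum_add_distrib, Finset.sum_ite_eq, Finset.sum_const,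
        Finset.card_univ, Fintype.card_fin, nsmul_eq_mul]
      simp only [Finset.mem_univ, if_true]
      simp only [Finset.sum_const, Finset.card_univ, Fintype.card_fin, nsmul_eq_mul]
      field_simp
      ring
    unfold mixedness
    rw [htrace]
    field_simp
    ring
  refine ⟨hC, hM, ?_⟩
  rw [hC, hM]
  field_simp
  ring
end

section
/- Let d ≥ 2 and let ρ be a density matrix on ℂ^d with mixedness M(ρ) = M_f (necessarily 0 ≤ M_f ≤ 1). Then the l1-norm of coherence of ρ satisfies C(ρ) ≤ (d−1)·√(1 − M_f); that is, the maximal coherence attainable at fixed mixedness M_f is (d−1)·√(1 − M_f). -/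
open scoped ComplexOrder

lemma entry_bound {d : ℕ} {ρ : Matrix (Fin d) (Fin d) ℂ} (hpsd : ρ.PosSemidef) (i j : Fin d) :
    Complex.normSq (ρ i j) ≤ (ρ i i).re * (ρ j j).re := by
  have hpi0 : 0 ≤ (ρ i i).re := by
    simpa [dotProduct, Matrix.mulVec, Pi.single_apply] using
      hpsd.re_dotProduct_nonneg (Pi.single i 1)
  have hpj0 : 0 ≤ (ρ j j).re := by
    simpa [dotProduct, Matrix.mulVec, Pi.single_apply] using
      hpsd.re_dotProduct_nonneg (Pi.single j 1)
  have key : ∀ t : ℝ, 0 ≤ (ρ j j).re * (t * t) + (2 * Complex.normSq (ρ i j)) * t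
      + (ρ i i).re * Complex.normSq (ρ i j) := by
    intro t
    have hB := hpsd.submatrix ![i, j]
    have h := hB.re_dotProduct_nonneg ![ρ i j, (t : ℂ)]
    simp [dotProduct, Matrix.mulVec, Fin.sum_univ_two, Matrix.submatrix_apply] at h
    have hsym : ρ j i = (starRingEnd ℂ) (ρ i j) := (hpsd.1.apply j i).symm
    have hdi : ρ i i = ((ρ i i).re : ℂ) := (Complex.conj_eq_iff_re.mp (hpsd.1.apply i i)).symm
    have hdj : ρ j j = ((ρ j j).re : ℂ) := (Complex.conj_eq_iff_re.mp (hpsd.1.apply j j)).symm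
    rw [hsym, hdi, hdj] at h
    simp [Complex.add_re, Complex.mul_re, Complex.ofReal_re, Complex.ofReal_im,
      Complex.normSq_apply] at h
    rw [Complex.normSq_apply]
    nlinarith [h]
  have hd := discrim_le_zero key
  rw [discrim] at hd
  have hnb0 : 0 ≤ Complex.normSq (ρ i j) := Complex.normSq_nonneg _
  nlinarith [hd, hnb0, mul_nonneg hpi0 hpj0]

/-- **Maximal coherence at fixed mixedness.**  For a density matrix `ρ` on `ℂ^d` (`d ≥ 2`)
with mixedness `M(ρ) = M_f`, necessarily `0 ≤ M_f ≤ 1` and the coherence is bounded as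
`C(ρ) ≤ (d-1)·√(1 - M_f)`. -/
theorem coherence_le_of_fixed_mixedness {d : ℕ} (hd : 2 ≤ d)
    (ρ : Matrix (Fin d) (Fin d) ℂ) (hpsd : ρ.PosSemidef) (htr : ρ.trace = 1)
    (M_f : ℝ) (hM : mixedness d ρ = M_f) :
    0 ≤ M_f ∧ M_f ≤ 1 ∧ l1Coherence ρ ≤ ((d : ℝ) - 1) * Real.sqrt (1 - M_f) := by
  classical
  set p : Fin d → ℝ := fun i => (ρ i i).re with hp
  set T : ℝ := ∑ i, ∑ j, Complex.normSq (ρ i j) with hTdef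
  have hdiag : ∀ k, ρ k k = ((p k : ℝ) : ℂ) :=
    fun k => (Complex.conj_eq_iff_re.mp (hpsd.1.apply k k)).symm
  -- sum of diagonal = 1
  have hp1 : ∑ i, p i = 1 := by
    have := congrArg Complex.re htr
    simpa [Matrix.trace, Matrix.diag, Complex.re_sum] using this
  -- trace of ρ² is T
  have hT : ((ρ * ρ).trace).re = T := by
    have h1 : (ρ * ρ).trace = ∑ i, ∑ j, (Complex.normSq (ρ i j) : ℂ) := by
      rw [Matrix.trace]
      refine Finset.sum_congr rfl fun i _ => ?_
      rw [Matrix.diag_apply, Matrix.mul_apply]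
      refine Finset.sum_congr rfl fun j _ => ?_
      have hsym : ρ j i = (starRingEnd ℂ) (ρ i j) := (hpsd.1.apply j i).symm
      rw [hsym, Complex.mul_conj]
    rw [h1]
    simp [Complex.re_sum, hTdef]
  -- diagonal normSq
  have hself : ∀ i, Complex.normSq (ρ i i) = p i ^ 2 := by
    intro i; rw [hdiag i, Complex.normSq_ofReal, sq]
  -- T ≤ 1
  have hT1 : T ≤ 1 := by
    have h2 : T ≤ ∑ i, ∑ j, p i * p j := by
      refine Finset.sum_le_sum fun i _ => Finset.sum_le_sum fun j _ => entry_bound hpsd i j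
    have h3 : ∑ i, ∑ j, p i * p j = (∑ i, p i) * (∑ j, p j) := by
      rw [Finset.sum_mul_sum]
    rw [h3, hp1, one_mul] at h2
    exact h2
  -- ∑ p² ≤ T
  have hpT : ∑ i, p i ^ 2 ≤ T := by
    refine Finset.sum_le_sum fun i _ => ?_
    rw [← hself i]
    exact Finset.single_le_sum (fun j _ => Complex.normSq_nonneg _) (Finset.mem_univ i)
  -- 1 ≤ d * ∑ p²
  have hcard : 1 ≤ (d : ℝ) * ∑ i, p i ^ 2 := by
    have := sq_sum_le_card_mul_sum_sq (s := (Finset.univ : Finset (Fin d))) (f := p)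
    simpa [hp1] using this
  have hdR : (0 : ℝ) < (d : ℝ) - 1 := by
    have : (2 : ℝ) ≤ (d : ℝ) := by exact_mod_cast hd
    linarith
  have hdpos : (0 : ℝ) < (d : ℝ) := by linarith
  -- M_f value
  have hMval : M_f = ((d : ℝ) / ((d : ℝ) - 1)) * (1 - T) := by
    rw [← hM, mixedness, hT]
  refine ⟨?_, ?_, ?_⟩
  · rw [hMval]
    have : 0 ≤ 1 - T := by linarith
    positivity
  · rw [hMval, div_mul_eq_mul_div, div_le_one hdR]
    nlinarith [hpT, hcard]
  · -- coherence bound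
    have hCrw : l1Coherence ρ = ∑ q ∈ Finset.univ.offDiag, ‖ρ q.1 q.2‖ := by
      rw [l1Coherence, ← Finset.sum_product', (show (Finset.univ : Finset (Fin d)).offDiag = (Finset.univ ×ˢ Finset.univ).filter (fun q : Fin d × Fin d => q.1 ≠ q.2) by ext q; simp [Finset.mem_offDiag]), Finset.sum_filter]
      exact Finset.sum_congr rfl fun q _ => (ite_not _ _ _).symm
    have hsplit : T = (∑ i, p i ^ 2) + ∑ q ∈ Finset.univ.offDiag, Complex.normSq (ρ q.1 q.2) := by
      rw [hTdef, ← Finset.sum_product', (show (Finset.univ : Finset (Fin d)).offDiag = (Finset.univ ×ˢ Finset.univ).filter (fun q : Fin d × Fin d => q.1 ≠ q.2) by ext q; simp [Finset.mem_offDiag]), Finset.sum_filter]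
      have : ∀ q ∈ (Finset.univ ×ˢ Finset.univ : Finset (Fin d × Fin d)),
          Complex.normSq (ρ q.1 q.2) = (if q.1 = q.2 then Complex.normSq (ρ q.1 q.2) else 0)
            + (if ¬ q.1 = q.2 then Complex.normSq (ρ q.1 q.2) else 0) := by
        intro q _; by_cases h : q.1 = q.2 <;> simp [h]
      rw [Finset.sum_congr rfl this, Finset.sum_add_distrib]
      congr 1
      rw [Finset.sum_product' (f := fun i j => if i = j then Complex.normSq (ρ i j) else 0)]
      refine Finset.sum_congr rfl fun i _ => ?_
      rw [Finset.sum_ite_eq (Finset.univ) i (fun j => Complex.normSq (ρ i j))]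
      simp [hself i]
    have hC0 : 0 ≤ l1Coherence ρ := by
      rw [hCrw]
      exact Finset.sum_nonneg fun q _ => norm_nonneg _
    have hcardOff : ((Finset.univ : Finset (Fin d)).offDiag.card : ℝ) = (d : ℝ) * (d : ℝ) - d := by
      rw [Finset.offDiag_card, Finset.card_univ, Fintype.card_fin]
      have : d ≤ d * d := Nat.le_mul_of_pos_left d (by omega)
      push_cast [Nat.cast_sub this]
      ring
    have hcs := sq_sum_le_card_mul_sum_sq (s := (Finset.univ : Finset (Fin d)).offDiag)
      (f := fun q => ‖ρ q.1 q.2‖)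
    have habs : ∀ q : Fin d × Fin d, ‖ρ q.1 q.2‖ ^ 2 = Complex.normSq (ρ q.1 q.2) :=
      fun q => Complex.sq_norm _
    rw [Finset.sum_congr rfl (fun q _ => habs q)] at hcs
    have hoffval : ∑ q ∈ Finset.univ.offDiag, Complex.normSq (ρ q.1 q.2)
        = T - ∑ i, p i ^ 2 := by linarith [hsplit]
    rw [hoffval, hcardOff, ← hCrw] at hcs
    -- hcs : (l1Coherence ρ)^2 ≤ (d*d - d) * (T - ∑ p²)
    have hC2 : (l1Coherence ρ) ^ 2 ≤ ((d : ℝ) - 1) ^ 2 * (1 - M_f) := by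
      have h1MF : ((d : ℝ) - 1) ^ 2 * (1 - M_f) = ((d : ℝ) - 1) * ((d : ℝ) * T - 1) := by
        rw [hMval]; field_simp; ring
      rw [h1MF]
      nlinarith [hcs, hcard, hpT]
    have hfin := Real.sqrt_le_sqrt hC2
    rw [Real.sqrt_sq hC0, Real.sqrt_mul (sq_nonneg _), Real.sqrt_sq hdR.le] at hfin
    exact hfin
end

section
/- Let ρ = [[a, c],[c̄, 1−a]] be a qubit density matrix, i.e. a real with 0 ≤ a ≤ 1 and |c|² ≤ a(1−a). Then its geometric coherence C_g(ρ) = (1 − √(1 − 4|c|²))/2 and its geometric mixedness M_g(ρ) = (1 + 2√(a(1−a) − |c|²))/2 satisfy the trade-off C_g(ρ) + M_g(ρ) ≤ 1, with equality if and only if a = 1/2. -/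
/-- **Trade-off between geometric coherence and geometric mixedness for qubits.**
For a qubit density matrix `ρ = !![a, c; conj c, 1 - a]` (with `a` real, `0 ≤ a ≤ 1`,
`|c|² ≤ a(1-a)`), the geometric coherence `C_g(ρ) = (1 - √(1 - 4|c|²))/2` and the
geometric mixedness `M_g(ρ) = (1 + 2√(a(1-a) - |c|²))/2` satisfy `C_g(ρ) + M_g(ρ) ≤ 1`,
with equality if and only if `a = 1/2`. -/
theorem qubit_geometric_coherence_mixedness_tradeoff (a : ℝ) (c : ℂ)
    (ha0 : 0 ≤ a) (ha1 : a ≤ 1) (hc : ‖c‖ ^ 2 ≤ a * (1 - a))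
    (Cg Mg : ℝ)
    (hCg : Cg = (1 - Real.sqrt (1 - 4 * ‖c‖ ^ 2)) / 2)
    (hMg : Mg = (1 + 2 * Real.sqrt (a * (1 - a) - ‖c‖ ^ 2)) / 2) :
    Cg + Mg ≤ 1 ∧ (Cg + Mg = 1 ↔ a = 1 / 2) := by
  set t := ‖c‖ ^ 2 with ht
  have ht0 : 0 ≤ t := sq_nonneg _
  have hu0 : 0 ≤ a * (1 - a) - t := by linarith
  have hv0 : 0 ≤ 1 - 4 * t := by nlinarith [sq_nonneg (2 * a - 1)]
  have h4u : 2 * Real.sqrt (a * (1 - a) - t) = Real.sqrt (4 * (a * (1 - a) - t)) := by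
    rw [show (4 : ℝ) * (a * (1 - a) - t) = 2 ^ 2 * (a * (1 - a) - t) by ring,
      Real.sqrt_mul (by positivity), Real.sqrt_sq (by norm_num)]
  have hle : 4 * (a * (1 - a) - t) ≤ 1 - 4 * t := by nlinarith [sq_nonneg (2 * a - 1)]
  have hsle : Real.sqrt (4 * (a * (1 - a) - t)) ≤ Real.sqrt (1 - 4 * t) :=
    Real.sqrt_le_sqrt hle
  constructor
  · rw [hCg, hMg, h4u]; linarith
  · rw [hCg, hMg, h4u]
    constructor
    · intro h
      have heq : Real.sqrt (4 * (a * (1 - a) - t)) = Real.sqrt (1 - 4 * t) := by linarith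
      have := (Real.sqrt_inj (by positivity) hv0).mp heq
      nlinarith [sq_nonneg (2 * a - 1)]
    · intro h
      subst h
      have : 4 * ((1:ℝ)/2 * (1 - 1/2) - t) = 1 - 4 * t := by ring
      rw [this]; ring
end

section
/- Let α ≥ 0 and for a real parameter a let ρ(a) denote the 2×2 matrix [[a, α],[α, 1−a]]. Suppose a₁, a₂ satisfy a₁ ≤ a₂ ≤ 1 − a₁ and a₁ ≠ 1/2, and set p = (1 − a₁ − a₂)/(1 − 2a₁). Then 0 ≤ p ≤ 1 and ρ(a₂) = p·ρ(a₁) + (1 − p)·σ_x·ρ(a₁)·σ_x, where σ_x = [[0,1],[1,0]]. In particular, any two qubit states of the above form with the same off-diagonal entry α (hence the same l1-norm of coherence 2α) are connected by a mixture of incoherent unitaries, i.e. by a mixed-unitary channel built from the identity and σ_x. -/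
/-- The matrix `ρ(a) = !![a, α; α, 1-a]` with fixed off-diagonal entry `α`. -/
noncomputable def rhoFixedCoh (α a : ℝ) : Matrix (Fin 2) (Fin 2) ℂ :=
  !![(a : ℂ), (α : ℂ); (α : ℂ), 1 - (a : ℂ)]

/-- The Pauli matrix `σ_x`, an incoherent unitary. -/
def sigmaX : Matrix (Fin 2) (Fin 2) ℂ := !![0, 1; 1, 0]

/-- **Transformations within a class of fixed coherence.**  For `a₁ ≤ a₂ ≤ 1 - a₁` with
`a₁ ≠ 1/2` and `p = (1 - a₁ - a₂)/(1 - 2a₁)`, one has `0 ≤ p ≤ 1` and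
`ρ(a₂) = p ρ(a₁) + (1-p) σ_x ρ(a₁) σ_x`: any two such states of the same coherence `2α`
are connected by a mixed-unitary channel built from incoherent unitaries `I` and `σ_x`. -/
theorem fixed_coherence_mixed_unitary_transformation (α : ℝ) (hα : 0 ≤ α)
    (a₁ a₂ : ℝ) (h12 : a₁ ≤ a₂) (h21 : a₂ ≤ 1 - a₁) (hne : a₁ ≠ 1 / 2)
    (p : ℝ) (hp : p = (1 - a₁ - a₂) / (1 - 2 * a₁)) :
    0 ≤ p ∧ p ≤ 1 ∧
    rhoFixedCoh α a₂ =
      (p : ℂ) • rhoFixedCoh α a₁ + ((1 : ℂ) - (p : ℂ)) • (sigmaX * rhoFixedCoh α a₁ * sigmaX) := by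
  have ha1 : a₁ < 1 / 2 := lt_of_le_of_ne (by linarith) hne
  have hd : 0 < 1 - 2 * a₁ := by linarith
  have hp0 : 0 ≤ p := by
    rw [hp]; exact div_nonneg (by linarith) hd.le
  have hp1 : p ≤ 1 := by
    rw [hp, div_le_one hd]; linarith
  refine ⟨hp0, hp1, ?_⟩
  have key : (p : ℂ) * a₁ + (1 - p) * (1 - a₁) = a₂ := by
    have : p * a₁ + (1 - p) * (1 - a₁) = a₂ := by
      rw [hp, div_mul_eq_mul_div, one_sub_div hd.ne', div_mul_eq_mul_div, ← add_div, div_eq_iff hd.ne']; ring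
    exact_mod_cast this
  have key2 : (p : ℂ) * (1 - a₁) + (1 - p) * a₁ = 1 - a₂ := by
    push_cast
    linear_combination -key
  ext i j
  fin_cases i <;> fin_cases j <;>
      simp [rhoFixedCoh, sigmaX, Matrix.mul_apply, Fin.sum_univ_two, Matrix.smul_apply] <;>
    [skip; ring; ring; skip]
  · linear_combination -key
  · linear_combination -key2
end
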